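/- Consider the characteristic polynomial of the 3-step non-equidistant scheme, P_β^3(λ) = −(49/36)λ⁹ + (3/2)λ⁸ − (3/20)λ⁵ + 1/90. Then P_β^3(1) = 0, λ = 1 is a simple root, and every complex root λ ≠ 1 of P_β^3 satisfies |λ| < 0.64. In particular the roots of P_β^3 satisfy the root conditions: every root has modulus at most 1 and every root of modulus 1 is simple. -/

import Mathlib

open Polynomial

/-- The characteristic polynomial of the 3-step non-equidistant scheme:
`P_β^3(λ) = −(49/36)λ⁹ + (3/2)λ⁸ − (3/20)λ⁵ + 1/90`. -/
noncomputable def charPolyBeta3 : Polynomial ℂ :=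
  C (-(49 / 36) : ℂ) * X ^ 9 + C (3 / 2 : ℂ) * X ^ 8 + C (-(3 / 20) : ℂ) * X ^ 5
    + C (1 / 90 : ℂ)

lemma quad_lb (z : ℂ) (b c m : ℝ) (hd : b^2 ≤ 4*c) (hm : c ≤ m^2) (hm0 : 0 ≤ m)
    (hr : m ≤ ‖z‖) :
    (‖z‖ - m)^2 ≤ ‖z^2 + (b:ℝ)*z + (c:ℝ)‖ := by
  set q : ℝ := Real.sqrt (c - b^2/4) with hq
  have hq2 : q^2 = c - b^2/4 := Real.sq_sqrt (by linarith)
  have hq2c : (q:ℂ)^2 = (c:ℂ) - (b:ℂ)^2/4 := by exact_mod_cast congrArg (Complex.ofReal) hq2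
  set α : ℂ := (↑(-b/2) : ℂ) + (q:ℝ) * Complex.I with hα
  set β : ℂ := (↑(-b/2) : ℂ) - (q:ℝ) * Complex.I with hβ
  have hfac : z^2 + (b:ℂ)*z + (c:ℂ) = (z - α) * (z - β) := by
    rw [hα, hβ]; push_cast
    linear_combination (q:ℂ)^2 * Complex.I_sq - hq2c
  have haα : ‖α‖ ≤ m := by
    have h1 : (‖α‖)^2 = (-b/2)^2 + q^2 := by
      rw [Complex.sq_norm, hα, Complex.normSq_add_mul_I]
    nlinarith [norm_nonneg α]
  have haβ : ‖β‖ ≤ m := by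
    have h1 : (‖β‖)^2 = (-b/2)^2 + (-q)^2 := by
      rw [Complex.sq_norm, hβ]
      rw [show (↑(-b/2) : ℂ) - (q:ℝ)*Complex.I = (↑(-b/2) : ℂ) + ↑(-q)*Complex.I by push_cast; ring]
      rw [Complex.normSq_add_mul_I]
    nlinarith [norm_nonneg β]
  have h2 : ‖z‖ - m ≤ ‖z - α‖ := by
    have := norm_sub_norm_le z α
    linarith
  have h3 : ‖z‖ - m ≤ ‖z - β‖ := by
    have := norm_sub_norm_le z β
    linarith
  rw [hfac, norm_mul]
  have h0 : (0:ℝ) ≤ ‖z‖ - m := by linarith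
  calc (‖z‖ - m)^2 = (‖z‖ - m) * (‖z‖ - m) := sq _
    _ ≤ ‖z - α‖ * ‖z - β‖ :=
        mul_le_mul h2 h3 h0 (norm_nonneg _)

lemma abs_sum8 (z c0 c1 c2 c3 c4 c5 c6 c7 : ℂ) (a0 a1 a2 a3 a4 a5 a6 a7 : ℝ)
    (h0 : ‖c0‖ ≤ a0) (h1 : ‖c1‖ ≤ a1) (h2 : ‖c2‖ ≤ a2)
    (h3 : ‖c3‖ ≤ a3) (h4 : ‖c4‖ ≤ a4) (h5 : ‖c5‖ ≤ a5)
    (h6 : ‖c6‖ ≤ a6) (h7 : ‖c7‖ ≤ a7) :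
    ‖c0 + c1*z^1 + c2*z^2 + c3*z^3 + c4*z^4 + c5*z^5 + c6*z^6 + c7*z^7‖ ≤
      a0 + a1*(‖z‖)^1 + a2*(‖z‖)^2 + a3*(‖z‖)^3
        + a4*(‖z‖)^4 + a5*(‖z‖)^5 + a6*(‖z‖)^6
        + a7*(‖z‖)^7 := by
  have key : ∀ (u v : ℂ) (au av : ℝ), ‖u‖ ≤ au → ‖v‖ ≤ av →
      ‖u + v‖ ≤ au + av :=
    fun u v au av hu hv => le_trans (norm_add_le u v) (add_le_add hu hv)
  have term : ∀ (c : ℂ) (a : ℝ) (n : ℕ), ‖c‖ ≤ a →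
      ‖c * z^n‖ ≤ a * (‖z‖)^n := by
    intro c a n hc
    rw [norm_mul, norm_pow]
    exact mul_le_mul_of_nonneg_right hc (pow_nonneg (norm_nonneg z) n)
  exact key _ _ _ _ (key _ _ _ _ (key _ _ _ _ (key _ _ _ _ (key _ _ _ _ (key _ _ _ _
    (key _ _ _ _ h0 (term _ _ _ h1)) (term _ _ _ h2)) (term _ _ _ h3)) (term _ _ _ h4))
    (term _ _ _ h5)) (term _ _ _ h6)) (term _ _ _ h7)

set_option maxHeartbeats 1000000 in
lemma gpos (r : ℝ) (hr : (16/25:ℝ) ≤ r) :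
    ((((123045428475808145032236737895686019853067865307496403898711/450000000000000000000000000000000000000000000000000000000000000000000000000000000))):ℝ) + ((((103783117881770903825239757977397294356938693312638830779529/180000000000000000000000000000000000000000000000000000000000000000000000000000000))):ℝ) * r^1 + ((((410588021882940184771939216587748485787507887380463429544297/450000000000000000000000000000000000000000000000000000000000000000000000000000000))):ℝ) * r^2 + ((((400422654359482307760091677208918276978401898226332790623991/180000000000000000000000000000000000000000000000000000000000000000000000000000000))):ℝ) * r^3 + ((((17359232690038277306551155558388826800845260917097050025939/450000000000000000000000000000000000000000000000000000000000000000000000000000000))):ℝ) * r^4 + ((((81539525747624957450054415267058404711317/18000000000000000000000000000000000000000000000000000000000000))):ℝ) * r^5 + ((((5462429508555062191973/360000000000000000000000000000000000000000))):ℝ) * r^6 + ((((1/150000000000000000000))):ℝ) * r^7 < (49/36 : ℝ) * ((r - ((((505906320504949/1000000000000000))):ℝ))^2 * (r - ((((506392251964623/1000000000000000))):ℝ))^2 * (r - ((((138488784473521/250000000000000))):ℝ))^2 * (r - ((((159162302111539/250000000000000))):ℝ))^2) := by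
  obtain ⟨t, ht, rfl⟩ : ∃ t, 0 ≤ t ∧ r = t + 16/25 :=
    ⟨r - 16/25, by linarith, by ring⟩
  nlinarith [pow_nonneg ht 2, pow_nonneg ht 3, pow_nonneg ht 4, pow_nonneg ht 5,
    pow_nonneg ht 6, pow_nonneg ht 7, pow_nonneg ht 8, ht]

set_option maxHeartbeats 2000000 in
lemma root_small (z : ℂ)
    (hQ : -(49/36:ℂ)*z^8 + (5/36)*z^7 + (5/36)*z^6 + (5/36)*z^5
        - (1/90)*z^4 - (1/90)*z^3 - (1/90)*z^2 - (1/90)*z - 1/90 = 0) :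
    ‖z‖ < 0.64 := by
  by_contra hcon
  push_neg at hcon
  have hr : (16/25 : ℝ) ≤ ‖z‖ := by
    norm_num at hcon; linarith
  have h1 := quad_lb z ((((-32517420013591358163/100000000000000000000))):ℝ) ((((12797060256342793167/50000000000000000000))):ℝ) ((((505906320504949/1000000000000000))):ℝ) (by norm_num) (by norm_num) (by norm_num) (by linarith)
  have h2 := quad_lb z ((((45955429620034277417/50000000000000000000))):ℝ) ((((25643311284980197833/100000000000000000000))):ℝ) ((((506392251964623/1000000000000000))):ℝ) (by norm_num) (by norm_num) (by norm_num) (by linarith)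
  have h3 := quad_lb z ((((12740123944726555221/25000000000000000000))):ℝ) ((((7671657369981339213/25000000000000000000))):ℝ) ((((138488784473521/250000000000000))):ℝ) (by norm_num) (by norm_num) (by norm_num) (by linarith)
  have h4 := quad_lb z ((((-120558016638036478779/100000000000000000000))):ℝ) ((((40532221461511591173/100000000000000000000))):ℝ) ((((159162302111539/250000000000000))):ℝ) (by norm_num) (by norm_num) (by norm_num) (by linarith)
  have hid : (49/36 : ℂ) * ((z^2 + ((((-32517420013591358163/100000000000000000000)):ℝ):ℂ)*z + ((((12797060256342793167/50000000000000000000)):ℝ):ℂ)) * (z^2 + ((((45955429620034277417/50000000000000000000)):ℝ):ℂ)*z + ((((25643311284980197833/100000000000000000000)):ℝ):ℂ)) * (z^2 + ((((12740123944726555221/25000000000000000000)):ℝ):ℂ)*z + ((((7671657369981339213/25000000000000000000)):ℝ):ℂ)) * (z^2 + ((((-120558016638036478779/100000000000000000000)):ℝ):ℂ)*z + ((((40532221461511591173/100000000000000000000)):ℝ):ℂ))) = ((((123045428475808145032236737895686019853067865307496403898711/450000000000000000000000000000000000000000000000000000000000000000000000000000000))):ℂ) + ((((103783117881770903825239757977397294356938693312638830779529/180000000000000000000000000000000000000000000000000000000000000000000000000000000))):ℂ)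 * z^1 + ((((410588021882940184771939216587748485787507887380463429544297/450000000000000000000000000000000000000000000000000000000000000000000000000000000))):ℂ) * z^2 + ((((-400422654359482307760091677208918276978401898226332790623991/180000000000000000000000000000000000000000000000000000000000000000000000000000000))):ℂ) * z^3 + ((((-17359232690038277306551155558388826800845260917097050025939/450000000000000000000000000000000000000000000000000000000000000000000000000000000))):ℂ) * z^4 + ((((-81539525747624957450054415267058404711317/18000000000000000000000000000000000000000000000000000000000000))):ℂ) * z^5 + ((((5462429508555062191973/360000000000000000000000000000000000000000))):ℂ) * z^6 + ((((1/150000000000000000000))):ℂ) * z^7 := by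
    linear_combination (norm := (push_cast; ring1)) -hQ
  have habs := congrArg norm hid
  rw [norm_mul, norm_mul, norm_mul, norm_mul] at habs
  have h4936 : ‖(49/36 : ℂ)‖ = 49/36 := by
    rw [norm_div]; norm_num
  rw [h4936] at habs
  have htri := abs_sum8 z (((((123045428475808145032236737895686019853067865307496403898711/450000000000000000000000000000000000000000000000000000000000000000000000000000000))):ℂ)) (((((103783117881770903825239757977397294356938693312638830779529/180000000000000000000000000000000000000000000000000000000000000000000000000000000))):ℂ)) (((((410588021882940184771939216587748485787507887380463429544297/450000000000000000000000000000000000000000000000000000000000000000000000000000000))):ℂ)) (((((-400422654359482307760091677208918276978401898226332790623991/180000000000000000000000000000000000000000000000000000000000000000000000000000000))):ℂ)) (((((-17359232690038277306551155558388826800845260917097050025939/450000000000000000000000000000000000000000000000000000000000000000000000000000000))):ℂ)) (((((-81539525747624957450054415267058404711317/18000000000000000000000000000000000000000000000000000000000000))):ℂ)) (((((5462429508555062191973/360000000000000000000000000000000000000000))):ℂ)) (((((1/150000000000000000000))):ℂ)) ((((123045428475808145032236737895686019853067865307496403898711/450000000000000000000000000000000000000000000000000000000000000000000000000000000)):ℝ))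 ((((103783117881770903825239757977397294356938693312638830779529/180000000000000000000000000000000000000000000000000000000000000000000000000000000)):ℝ)) ((((410588021882940184771939216587748485787507887380463429544297/450000000000000000000000000000000000000000000000000000000000000000000000000000000)):ℝ)) ((((400422654359482307760091677208918276978401898226332790623991/180000000000000000000000000000000000000000000000000000000000000000000000000000000)):ℝ)) ((((17359232690038277306551155558388826800845260917097050025939/450000000000000000000000000000000000000000000000000000000000000000000000000000000)):ℝ)) ((((81539525747624957450054415267058404711317/18000000000000000000000000000000000000000000000000000000000000)):ℝ)) ((((5462429508555062191973/360000000000000000000000000000000000000000)):ℝ)) ((((1/150000000000000000000)):ℝ)) (by rw [norm_div]; norm_num) (by rw [norm_div]; norm_num) (by rw [norm_div]; norm_num) (by rw [norm_div]; norm_num) (by rw [norm_div]; norm_num) (by rw [norm_div]; norm_num) (by rw [norm_div]; norm_num) (by rw [norm_div]; norm_num)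
  rw [← habs] at htri
  have h12 := mul_le_mul h1 h2 (sq_nonneg _) (norm_nonneg _)
  have h123 := mul_le_mul h12 h3 (sq_nonneg _) (mul_nonneg (norm_nonneg _) (norm_nonneg _))
  have h1234 := mul_le_mul h123 h4 (sq_nonneg _) (mul_nonneg (mul_nonneg (norm_nonneg _) (norm_nonneg _)) (norm_nonneg _))
  have hchain : (49/36 : ℝ) * ((‖z‖ - ((((505906320504949/1000000000000000))):ℝ))^2 * (‖z‖ - ((((506392251964623/1000000000000000))):ℝ))^2 * (‖z‖ - ((((138488784473521/250000000000000))):ℝ))^2 * (‖z‖ - ((((159162302111539/250000000000000))):ℝ))^2) ≤ (49/36 : ℝ) * (‖z^2 + ((((-32517420013591358163/100000000000000000000)):ℝ):ℂ)*z + ((((12797060256342793167/50000000000000000000)):ℝ):ℂ)‖ * ‖z^2 + ((((45955429620034277417/50000000000000000000)):ℝ):ℂ)*z + ((((25643311284980197833/100000000000000000000)):ℝ):ℂ)‖ * ‖z^2 + ((((12740123944726555221/25000000000000000000)):ℝ):ℂ)*z + ((((7671657369981339213/25000000000000000000)):ℝ):ℂ)‖ * ‖z^2 + ((((-120558016638036478779/100000000000000000000)):ℝ):ℂ)*z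 + ((((40532221461511591173/100000000000000000000)):ℝ):ℂ)‖) :=
    mul_le_mul_of_nonneg_left h1234 (by norm_num)
  have hfin : (49/36 : ℝ) * ((‖z‖ - ((((505906320504949/1000000000000000))):ℝ))^2 * (‖z‖ - ((((506392251964623/1000000000000000))):ℝ))^2 * (‖z‖ - ((((138488784473521/250000000000000))):ℝ))^2 * (‖z‖ - ((((159162302111539/250000000000000))):ℝ))^2) ≤ ((((123045428475808145032236737895686019853067865307496403898711/450000000000000000000000000000000000000000000000000000000000000000000000000000000))):ℝ) + ((((103783117881770903825239757977397294356938693312638830779529/180000000000000000000000000000000000000000000000000000000000000000000000000000000))):ℝ) * (‖z‖)^1 + ((((410588021882940184771939216587748485787507887380463429544297/450000000000000000000000000000000000000000000000000000000000000000000000000000000))):ℝ) * (‖z‖)^2 + ((((400422654359482307760091677208918276978401898226332790623991/180000000000000000000000000000000000000000000000000000000000000000000000000000000))):ℝ) * (‖z‖)^3 + ((((17359232690038277306551155558388826800845260917097050025939/450000000000000000000000000000000000000000000000000000000000000000000000000000000))):ℝ) * (‖z‖)^4 + ((((81539525747624957450054415267058404711317/18000000000000000000000000000000000000000000000000000000000000))):ℝ)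 * (‖z‖)^5 + ((((5462429508555062191973/360000000000000000000000000000000000000000))):ℝ) * (‖z‖)^6 + ((((1/150000000000000000000))):ℝ) * (‖z‖)^7 := le_trans hchain htri
  linarith [gpos (‖z‖) hr, hfin]

/-- The deflated polynomial `Q` with `P(z) = (z-1) Q(z)`. -/
noncomputable def qPolyBeta3 : Polynomial ℂ :=
  C (-(49/36) : ℂ) * X^8 + C (5/36 : ℂ) * X^7 + C (5/36 : ℂ) * X^6 + C (5/36 : ℂ) * X^5
    + C (-(1/90) : ℂ) * X^4 + C (-(1/90) : ℂ) * X^3 + C (-(1/90) : ℂ) * X^2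
    + C (-(1/90) : ℂ) * X + C (-(1/90) : ℂ)

lemma qPolyBeta3_eval (z : ℂ) : qPolyBeta3.eval z
    = -(49/36:ℂ)*z^8 + (5/36)*z^7 + (5/36)*z^6 + (5/36)*z^5
        - (1/90)*z^4 - (1/90)*z^3 - (1/90)*z^2 - (1/90)*z - 1/90 := by
  simp [qPolyBeta3]; ring

lemma charPolyBeta3_eval (z : ℂ) : charPolyBeta3.eval z
    = -(49/36:ℂ)*z^9 + (3/2)*z^8 - (3/20)*z^5 + 1/90 := by
  simp [charPolyBeta3]; ring

lemma charPolyBeta3_factor : charPolyBeta3 = (X - C 1) * qPolyBeta3 := by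
  apply Polynomial.funext
  intro z
  rw [charPolyBeta3_eval, eval_mul, qPolyBeta3_eval]
  simp only [eval_sub, eval_X, eval_C]
  ring

lemma charPolyBeta3_ne_zero : charPolyBeta3 ≠ 0 := by
  intro h
  have := charPolyBeta3_eval 0
  rw [h] at this
  norm_num at this

lemma rootMult_one : charPolyBeta3.rootMultiplicity 1 = 1 := by
  have hq1 : qPolyBeta3.eval 1 = -1 := by rw [qPolyBeta3_eval]; norm_num
  have hne : (X - C 1) * qPolyBeta3 ≠ 0 := by
    rw [← charPolyBeta3_factor]; exact charPolyBeta3_ne_zero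
  rw [charPolyBeta3_factor, Polynomial.rootMultiplicity_mul hne,
    Polynomial.rootMultiplicity_X_sub_C_self,
    Polynomial.rootMultiplicity_eq_zero (by
      intro h
      rw [Polynomial.IsRoot, hq1] at h
      norm_num at h)]

lemma root_lt (z : ℂ) (hz : charPolyBeta3.eval z = 0) (hz1 : z ≠ 1) :
    ‖z‖ < 0.64 := by
  apply root_small
  have h := charPolyBeta3_eval z
  rw [hz] at h
  have hfac : (z - 1) * (-(49/36:ℂ)*z^8 + (5/36)*z^7 + (5/36)*z^6 + (5/36)*z^5
      - (1/90)*z^4 - (1/90)*z^3 - (1/90)*z^2 - (1/90)*z - 1/90)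
      = -(49/36:ℂ)*z^9 + (3/2)*z^8 - (3/20)*z^5 + 1/90 := by ring
  have : (z - 1) * (-(49/36:ℂ)*z^8 + (5/36)*z^7 + (5/36)*z^6 + (5/36)*z^5
      - (1/90)*z^4 - (1/90)*z^3 - (1/90)*z^2 - (1/90)*z - 1/90) = 0 := by
    rw [hfac, ← h]
  rcases mul_eq_zero.mp this with h1 | h2
  · exact absurd (sub_eq_zero.mp h1) hz1
  · exact h2

/-- `P_β^3(1) = 0`, `λ = 1` is a simple root, every complex root `λ ≠ 1` satisfies
`|λ| < 0.64`, and the root conditions hold: every root has modulus at most 1 and every root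
of modulus 1 is simple. -/
theorem charPolyBeta3_root_conditions :
    charPolyBeta3.eval 1 = 0 ∧
    charPolyBeta3.rootMultiplicity 1 = 1 ∧
    (∀ z : ℂ, charPolyBeta3.eval z = 0 → z ≠ 1 → ‖z‖ < 0.64) ∧
    (∀ z : ℂ, charPolyBeta3.eval z = 0 →
      ‖z‖ ≤ 1 ∧ (‖z‖ = 1 → charPolyBeta3.rootMultiplicity z = 1)) := by
  refine ⟨by rw [charPolyBeta3_eval]; norm_num, rootMult_one, root_lt, ?_⟩
  intro z hz
  by_cases hz1 : z = 1
  · subst hz1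
    simp only [norm_one, le_refl, true_and]
    exact fun _ => rootMult_one
  · have hlt := root_lt z hz hz1
    constructor
    · have : (0.64:ℝ) ≤ 1 := by norm_num
      linarith
    · intro habs1
      rw [habs1] at hlt
      norm_num at hlt
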